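/- There is an absolute constant C > 0 with the following property. For all positive integers ω and r and every tuple (j_1, ..., j_ω) ∈ [r]^ω, there exist a positive integer s, unit vectors z_1, ..., z_s ∈ ℝ^r, and a vector w ∈ ℝ^s such that Σ_{i=1}^{s} w_i · z_i^{⊗ω} = (1/ω!) Σ_{π ∈ S_ω} e_{j_{π(1)}} ⊗ ··· ⊗ e_{j_{π(ω)}} and ‖w‖_1 ≤ exp(C · ω² · (log ω + 1)²). -/

import Mathlib

open Finset

noncomputable def sg (b : Bool) : ℝ := if b then 1 else -1

lemma abs_sg (b : Bool) : |sg b| = 1 := by cases b <;> simp [sg]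

lemma sum_sg_prod {ω : ℕ} (f : Fin ω → Fin ω) :
    ∑ ε : Fin ω → Bool, (∏ i, sg (ε i)) * ∏ t, sg (ε (f t))
    = if Function.Bijective f then (2:ℝ)^ω else 0 := by
  classical
  have hfiber : ∀ ε : Fin ω → Bool, ∏ t, sg (ε (f t))
      = ∏ i, sg (ε i) ^ #(filter (fun t => f t = i) univ) := by
    intro ε
    have h := Finset.prod_comp (s := (univ : Finset (Fin ω))) (fun i : Fin ω => sg (ε i)) f
    rw [h]
    refine Finset.prod_subset (subset_univ _) ?_
    intro i _ hi
    have h0 : #(filter (fun t => f t = i) univ) = 0 := by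
      simp only [Finset.card_eq_zero, Finset.filter_eq_empty_iff]
      intro t _
      exact fun h => hi (Finset.mem_image.2 ⟨t, mem_univ t, h⟩)
    simp [h0]
  have step1 : ∀ ε : Fin ω → Bool,
      (∏ i, sg (ε i)) * ∏ t, sg (ε (f t))
        = ∏ i, sg (ε i) ^ (#(filter (fun t => f t = i) univ) + 1) := by
    intro ε
    rw [hfiber, ← Finset.prod_mul_distrib]
    exact Finset.prod_congr rfl fun i _ => (pow_succ' _ _).symm
  simp only [step1]
  rw [← Fintype.piFinset_univ, ← Finset.prod_univ_sum (fun _ => (univ : Finset Bool))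
    (fun i b => sg b ^ (#(filter (fun t => f t = i) univ) + 1))]
  have hterm : ∀ n : ℕ, ∑ b : Bool, sg b ^ (n + 1) = (1 + (-1:ℝ)^(n+1)) := by
    intro n; simp [sg]
  simp only [hterm]
  by_cases hb : Function.Bijective f
  · have hc1 : ∀ i, #(filter (fun t => f t = i) univ) = 1 := by
      intro i
      obtain ⟨a, ha⟩ := hb.2 i
      refine Finset.card_eq_one.2 ⟨a, ?_⟩
      ext x
      simp only [Finset.mem_filter, mem_univ, true_and, Finset.mem_singleton]
      constructor
      · intro h; exact hb.1 (h.trans ha.symm)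
      · rintro rfl; exact ha
    rw [if_pos hb]
    have h2 : ∀ i : Fin ω, (1 + (-1:ℝ)^(#(filter (fun t => f t = i) univ) + 1)) = 2 := by
      intro i; rw [hc1]; norm_num
    rw [Finset.prod_congr rfl fun i _ => h2 i, Finset.prod_const, Finset.card_univ,
      Fintype.card_fin]
  · rw [if_neg hb]
    have hsurj : ¬ Function.Surjective f := by
      intro h; exact hb ((Finite.surjective_iff_bijective).1 h)
    simp only [Function.Surjective, not_forall, not_exists] at hsurj
    obtain ⟨i, hi⟩ := hsurj
    refine Finset.prod_eq_zero (mem_univ i) ?_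
    have h0 : #(filter (fun t => f t = i) univ) = 0 := by
      simp only [Finset.card_eq_zero, Finset.filter_eq_empty_iff]
      intro t _ h
      exact hi t h
    simp [h0]

lemma key_identity {ω r : ℕ} (j idx : Fin ω → Fin r) :
    ∑ ε : Fin ω → Bool,
        (∏ i, sg (ε i)) * ∏ t, (∑ i, sg (ε i) * (if j i = idx t then (1:ℝ) else 0))
    = 2^ω * ∑ π : Equiv.Perm (Fin ω), ∏ t, (if idx t = j (π t) then (1:ℝ) else 0) := by
  classical
  have expand : ∀ ε : Fin ω → Bool,
      ∏ t, (∑ i, sg (ε i) * (if j i = idx t then (1:ℝ) else 0))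
      = ∑ f : Fin ω → Fin ω, ∏ t, (sg (ε (f t)) * (if j (f t) = idx t then (1:ℝ) else 0)) := by
    intro ε
    rw [Finset.prod_univ_sum (fun _ => (univ : Finset (Fin ω)))
      (fun t i => sg (ε i) * (if j i = idx t then (1:ℝ) else 0)), Fintype.piFinset_univ]
  simp only [expand, Finset.mul_sum]
  rw [Finset.sum_comm]
  have split : ∀ (f : Fin ω → Fin ω) (ε : Fin ω → Bool),
      (∏ i, sg (ε i)) * ∏ t, (sg (ε (f t)) * (if j (f t) = idx t then (1:ℝ) else 0))
      = ((∏ i, sg (ε i)) * ∏ t, sg (ε (f t))) * ∏ t, (if j (f t) = idx t then (1:ℝ) else 0) := by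
    intro f ε; rw [Finset.prod_mul_distrib]; ring
  simp only [split, ← Finset.sum_mul, sum_sg_prod, ite_mul, zero_mul]
  rw [← Finset.sum_filter, ← Finset.mul_sum, ← Finset.mul_sum]
  congr 1
  have hbij : ∑ π ∈ (univ : Finset (Equiv.Perm (Fin ω))),
      (∏ t, (if idx t = j (π t) then (1:ℝ) else 0))
      = ∑ f ∈ (univ : Finset (Fin ω → Fin ω)).filter (fun f => Function.Bijective f),
      (∏ t, (if j (f t) = idx t then (1:ℝ) else 0)) := by
    refine Finset.sum_bij (fun π _ => ⇑π) ?_ ?_ ?_ ?_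
    · intro π _
      exact Finset.mem_filter.2 ⟨Finset.mem_univ _, π.bijective⟩
    · intro π1 _ π2 _ h
      exact Equiv.coe_fn_injective h
    · intro f hf
      exact ⟨Equiv.ofBijective f (Finset.mem_filter.1 hf).2, Finset.mem_univ _, rfl⟩
    · intro π _
      exact Finset.prod_congr rfl fun t _ => if_congr eq_comm rfl rfl
  exact hbij.symm


/-- Decomposing symmetric tensors: there is an absolute constant `C > 0` such that
any symmetrized standard basis tensor `(1/ω!) ∑_{π ∈ S_ω} e_{j_{π(1)}} ⊗ ⋯ ⊗ e_{j_{π(ω)}}`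
can be written as `∑_i w_i z_i^{⊗ω}` with unit vectors `z_i` and
`‖w‖₁ ≤ exp(C ω² (log ω + 1)²)`. -/
theorem decompose_symmetric_basis_tensor :
    ∃ C : ℝ, 0 < C ∧ ∀ (ω r : ℕ), 0 < ω → 0 < r → ∀ j : Fin ω → Fin r,
      ∃ (s : ℕ) (z : Fin s → Fin r → ℝ) (w : Fin s → ℝ),
        0 < s ∧
        (∀ i, ∑ k, z i k ^ 2 = 1) ∧
        (∀ idx : Fin ω → Fin r,
          ∑ i, w i * ∏ t, z i (idx t)
            = (1 / (Nat.factorial ω : ℝ)) *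
                ∑ π : Equiv.Perm (Fin ω), ∏ t, (if idx t = j (π t) then (1 : ℝ) else 0)) ∧
        ∑ i, |w i| ≤ Real.exp (C * (ω : ℝ) ^ 2 * (Real.log (ω : ℝ) + 1) ^ 2) := by
  classical
  refine ⟨1, one_pos, ?_⟩
  intro ω r hω hr j
  set v : (Fin ω → Bool) → Fin r → ℝ :=
    fun ε k => ∑ i, sg (ε i) * (if j i = k then 1 else 0) with hv
  set N : (Fin ω → Bool) → ℝ := fun ε => Real.sqrt (∑ k, v ε k ^ 2) with hN
  have hNnn : ∀ ε, 0 ≤ N ε := fun ε => Real.sqrt_nonneg _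
  have hNsq : ∀ ε, N ε ^ 2 = ∑ k, v ε k ^ 2 :=
    fun ε => Real.sq_sqrt (Finset.sum_nonneg fun k _ => sq_nonneg _)
  set Z : (Fin ω → Bool) → Fin r → ℝ :=
    fun ε k => if N ε = 0 then (if k = ⟨0, hr⟩ then 1 else 0) else v ε k / N ε with hZ
  set W : (Fin ω → Bool) → ℝ :=
    fun ε => (∏ i, sg (ε i)) * N ε ^ ω / (2^ω * (Nat.factorial ω : ℝ)) with hW
  have hfac : (Nat.factorial ω : ℝ) ≠ 0 := by
    exact_mod_cast (Nat.factorial_pos ω).ne'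
  have h2pow : (2:ℝ)^ω ≠ 0 := by positivity
  have hcard : Fintype.card (Fin ω → Bool) = 2^ω := by simp
  set E : (Fin ω → Bool) ≃ Fin (2^ω) := Fintype.equivFinOfCardEq hcard with hE
  refine ⟨2^ω, fun i => Z (E.symm i), fun i => W (E.symm i), by positivity, ?_, ?_, ?_⟩
  · -- unit vectors
    intro i
    by_cases h : N (E.symm i) = 0
    · simp only [hZ, h, if_true, eq_self_iff_true]
      have hsq : ∀ k : Fin r, ((if k = (⟨0, hr⟩ : Fin r) then (1:ℝ) else 0))^2
          = if k = (⟨0, hr⟩ : Fin r) then (1:ℝ) else 0 := by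
        intro k; split <;> norm_num
      rw [Finset.sum_congr rfl fun k _ => hsq k]
      simp
    · simp only [hZ, if_neg h, div_pow]
      rw [← Finset.sum_div, ← hNsq (E.symm i), div_self (pow_ne_zero 2 h)]
  · -- identity
    intro idx
    have hsum : ∑ i : Fin (2^ω), W (E.symm i) * ∏ t, Z (E.symm i) (idx t)
        = ∑ ε : Fin ω → Bool, W ε * ∏ t, Z ε (idx t) :=
      Fintype.sum_equiv E.symm _ _ (fun i => rfl)
    rw [hsum]
    have hterm : ∀ ε, W ε * ∏ t, Z ε (idx t)
        = (1/((2:ℝ)^ω * (Nat.factorial ω : ℝ))) * ((∏ i, sg (ε i)) * ∏ t, v ε (idx t)) := by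
      intro ε
      by_cases h : N ε = 0
      · have hsum0 : ∑ k, v ε k ^ 2 = 0 := by
          have := hNsq ε; rw [h] at this; simpa using this.symm
        have hv0 : ∀ k, v ε k = 0 := by
          intro k
          have h3 := (Finset.sum_eq_zero_iff_of_nonneg
            (fun k _ => sq_nonneg (v ε k))).1 hsum0 k (mem_univ k)
          exact pow_eq_zero_iff (two_ne_zero) |>.1 h3
        have hprod : ∏ t, v ε (idx t) = 0 :=
          Finset.prod_eq_zero (Finset.mem_univ (⟨0, hω⟩ : Fin ω)) (hv0 _)
        simp only [hW, h, hprod]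
        rw [zero_pow (Nat.pos_iff_ne_zero.1 hω)]
        simp
      · simp only [hZ, hW, if_neg h]
        rw [Finset.prod_div_distrib, Finset.prod_const, Finset.card_univ, Fintype.card_fin]
        have hNpow : N ε ^ ω ≠ 0 := pow_ne_zero _ h
        field_simp
    rw [Finset.sum_congr rfl fun ε _ => hterm ε, ← Finset.mul_sum]
    have hk := key_identity j idx
    simp only [hv] at *
    rw [hk]
    field_simp
  · -- norm bound
    have hsum : ∑ i : Fin (2^ω), |W (E.symm i)| = ∑ ε : Fin ω → Bool, |W ε| :=
      Fintype.sum_equiv E.symm _ _ (fun i => rfl)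
    rw [hsum]
    have hω1 : (1:ℝ) ≤ (ω:ℝ) := by exact_mod_cast hω
    have hωpos : (0:ℝ) < (ω:ℝ) := by linarith
    have hNle : ∀ ε, N ε ≤ (ω:ℝ) := by
      intro ε
      have hb : ∀ k, v ε k ^ 2 ≤ (∑ i, (if j i = k then (1:ℝ) else 0))^2 := by
        intro k
        have habs : |v ε k| ≤ ∑ i, (if j i = k then (1:ℝ) else 0) := by
          refine (Finset.abs_sum_le_sum_abs _ _).trans ?_
          refine Finset.sum_le_sum fun i _ => ?_
          rw [abs_mul, abs_sg, one_mul]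
          split <;> norm_num
        calc v ε k ^ 2 = |v ε k| ^ 2 := (sq_abs _).symm
          _ ≤ (∑ i, (if j i = k then (1:ℝ) else 0))^2 :=
            pow_le_pow_left₀ (abs_nonneg _) habs 2
      have h1 : ∑ k, v ε k ^ 2 ≤ ((ω:ℝ))^2 := by
        calc ∑ k, v ε k ^ 2 ≤ ∑ k, (∑ i, (if j i = k then (1:ℝ) else 0))^2 :=
              Finset.sum_le_sum fun k _ => hb k
          _ ≤ (∑ k, ∑ i, (if j i = k then (1:ℝ) else 0))^2 :=
              Finset.sum_sq_le_sq_sum_of_nonneg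
                (fun k _ => Finset.sum_nonneg fun i _ => by split <;> norm_num)
          _ = ((ω:ℝ))^2 := by
              rw [Finset.sum_comm]
              simp
      calc N ε = Real.sqrt (∑ k, v ε k ^ 2) := rfl
        _ ≤ Real.sqrt (((ω:ℝ))^2) := Real.sqrt_le_sqrt h1
        _ = (ω:ℝ) := Real.sqrt_sq (le_of_lt hωpos)
    have habsW : ∀ ε, |W ε| ≤ (ω:ℝ)^ω / ((2:ℝ)^ω * (Nat.factorial ω : ℝ)) := by
      intro ε
      have hden : (0:ℝ) < (2:ℝ)^ω * (Nat.factorial ω : ℝ) := by positivity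
      have h1 : |W ε| = N ε ^ ω / ((2:ℝ)^ω * (Nat.factorial ω : ℝ)) := by
        rw [hW]
        rw [abs_div, abs_mul, Finset.abs_prod]
        simp only [abs_sg]
        rw [Finset.prod_const_one, one_mul, abs_of_nonneg (pow_nonneg (hNnn ε) ω),
          abs_of_pos hden]
      rw [h1]
      exact (div_le_div_iff_of_pos_right hden).2 (pow_le_pow_left₀ (hNnn ε) (hNle ε) ω)
    calc ∑ ε : Fin ω → Bool, |W ε|
        ≤ ∑ _ε : Fin ω → Bool, (ω:ℝ)^ω / ((2:ℝ)^ω * (Nat.factorial ω : ℝ)) :=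
          Finset.sum_le_sum fun ε _ => habsW ε
      _ = (2:ℝ)^ω * ((ω:ℝ)^ω / ((2:ℝ)^ω * (Nat.factorial ω : ℝ))) := by
          rw [Finset.sum_const, Finset.card_univ, hcard, nsmul_eq_mul]
          push_cast
          ring
      _ = (ω:ℝ)^ω / (Nat.factorial ω : ℝ) := by field_simp
      _ ≤ (ω:ℝ)^ω := by
          refine div_le_self (by positivity) ?_
          exact_mod_cast Nat.one_le_iff_ne_zero.2 (Nat.factorial_pos ω).ne'
      _ = Real.exp ((ω:ℝ) * Real.log (ω:ℝ)) := by
          rw [Real.exp_nat_mul, Real.exp_log hωpos]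
      _ ≤ Real.exp (1 * (ω : ℝ) ^ 2 * (Real.log (ω : ℝ) + 1) ^ 2) := by
          rw [Real.exp_le_exp]
          have hL : (0:ℝ) ≤ Real.log (ω:ℝ) := Real.log_nonneg hω1
          have e1 : Real.log (ω:ℝ) ≤ (Real.log (ω:ℝ) + 1)^2 := by nlinarith [sq_nonneg (Real.log (ω:ℝ))]
          have e2 : (ω:ℝ) ≤ (ω:ℝ)^2 := by nlinarith
          calc (ω:ℝ) * Real.log (ω:ℝ) ≤ (ω:ℝ) * (Real.log (ω:ℝ) + 1)^2 :=
                mul_le_mul_of_nonneg_left e1 (le_of_lt hωpos)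
            _ ≤ (ω:ℝ)^2 * (Real.log (ω:ℝ) + 1)^2 :=
                mul_le_mul_of_nonneg_right e2 (sq_nonneg _)
            _ = 1 * (ω:ℝ)^2 * (Real.log (ω:ℝ) + 1)^2 := by ring
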